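/- Let H be a complex Hilbert space and let a, b be bounded selfadjoint operators on H such that a is positive (⟨a x, x⟩ ≥ 0 for all x) and injective. If a b + b a = 0, then b = 0. -/

import Mathlib

open scoped ComplexOrder

/-- If `c` commutes with a selfadjoint element `a` of a C⋆-algebra, it commutes with
`cfcHom ha f` for every `f`. -/
lemma aux_commute_cfcHom {A : Type*} [CStarAlgebra A] {a c : A} (ha : IsSelfAdjoint a)
    (h : Commute a c) (f : C(spectrum ℝ a, ℝ)) : Commute (cfcHom ha f) c := by
  have hmem : f ∈ (polynomialFunctions (spectrum ℝ a)).topologicalClosure := by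
    rw [ContinuousMap.subalgebra_topologicalClosure_eq_top_of_separatesPoints _
      (polynomialFunctions_separatesPoints _)]
    trivial
  rw [← SetLike.mem_coe, Subalgebra.topologicalClosure_coe] at hmem
  have hclosed : IsClosed {g : C(spectrum ℝ a, ℝ) | Commute (cfcHom ha g) c} := by
    have h1 : IsClosed {x : A | x * c = c * x} :=
      isClosed_eq (continuous_id.mul continuous_const) (continuous_const.mul continuous_id)
    exact h1.preimage (cfcHom_continuous ha)
  have hsub : (polynomialFunctions (spectrum ℝ a) : Set C(spectrum ℝ a, ℝ)) ⊆
      {g | Commute (cfcHom ha g) c} := by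
    intro g hg
    rw [polynomialFunctions_coe] at hg
    obtain ⟨p, rfl⟩ := hg
    have key : cfcHom ha ((Polynomial.toContinuousMapOnAlgHom (spectrum ℝ a)) p)
        = Polynomial.aeval a p := by
      have heq : ((cfcHom ha (R := ℝ)).toAlgHom.comp
          (Polynomial.toContinuousMapOnAlgHom (spectrum ℝ a))) = Polynomial.aeval a := by
        apply Polynomial.algHom_ext
        simpa [Polynomial.toContinuousMapOn, Polynomial.toContinuousMap,
          ContinuousMap.restrict] using cfcHom_id ha
      exact DFunLike.congr_fun heq p
    have hpoly : ∀ q : Polynomial ℝ, Commute (Polynomial.aeval a q) c := by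
      intro q
      induction q using Polynomial.induction_on' with
      | add p' q' hp hq => simpa [map_add] using hp.add_left hq
      | monomial n r =>
        simpa [Polynomial.aeval_monomial] using
          (Algebra.commute_algebraMap_left r c).mul_left (h.pow_left n)
    show Commute _ c
    rw [key]
    exact hpoly p
  exact closure_minimal hsub hclosed hmem

lemma aux_commute_cfc {A : Type*} [CStarAlgebra A] {a c : A} (ha : IsSelfAdjoint a)
    (h : Commute a c) (f : ℝ → ℝ) : Commute (cfc f a) c := by
  by_cases hf : ContinuousOn f (spectrum ℝ a)
  · rw [cfc_apply f a ha hf]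
    exact aux_commute_cfcHom ha h _
  · rw [cfc_apply_of_not_continuousOn a hf]
    exact Commute.zero_left c

/-- If `a, b` are bounded selfadjoint operators on a complex Hilbert space, `a` is positive
and injective, and `a b + b a = 0`, then `b = 0`. -/
theorem stmt_11 {H : Type*} [NormedAddCommGroup H] [InnerProductSpace ℂ H] [CompleteSpace H]
    (a b : H →L[ℂ] H) (ha : IsSelfAdjoint a) (hb : IsSelfAdjoint b)
    (hpos : ∀ x : H, 0 ≤ (inner ℂ (a x) x : ℂ)) (hinj : Function.Injective a)
    (hanti : a * b + b * a = 0) : b = 0 := by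
  -- `a` is nonnegative in the C⋆-algebra of operators
  have hanonneg : (0 : H →L[ℂ] H) ≤ a := by
    rw [ContinuousLinearMap.nonneg_iff_isPositive]
    refine ⟨ContinuousLinearMap.isSelfAdjoint_iff_isSymmetric.mp ha, fun x => ?_⟩
    have := hpos x
    rw [Complex.le_def] at this
    simpa [ContinuousLinearMap.reApplyInnerSelf] using this.1
  -- the real square root of `a`
  set s : H →L[ℂ] H := cfc Real.sqrt a with hs_def
  have hs_sa : IsSelfAdjoint s := cfc_predicate Real.sqrt a
  have hs_sq : s * s = a := by
    rw [hs_def, ← cfc_mul Real.sqrt Real.sqrt a]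
    have heq : cfc (fun x => Real.sqrt x * Real.sqrt x) a = cfc id a :=
      cfc_congr fun x hx => Real.mul_self_sqrt (spectrum_nonneg_of_nonneg hanonneg hx)
    rw [heq, cfc_id ℝ a ha]
  -- `a*b = -(b*a)` and commutation of `a` with `b*b`
  have hab : a * b = -(b * a) := by
    have := hanti
    rw [add_eq_zero_iff_eq_neg] at this
    exact this
  have hcomm : Commute a (b * b) := by
    show a * (b * b) = (b * b) * a
    calc a * (b * b) = (a * b) * b := by rw [mul_assoc]
    _ = -((b * a) * b) := by rw [hab, neg_mul]
    _ = -(b * (a * b)) := by rw [mul_assoc]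
    _ = -(b * (-(b * a))) := by rw [hab]
    _ = b * (b * a) := by rw [mul_neg, neg_neg]
    _ = (b * b) * a := by rw [mul_assoc]
  have hscomm : Commute s (b * b) := aux_commute_cfc ha hcomm Real.sqrt
  -- pointwise versions
  have hab' : ∀ x : H, a (b x) = -(b (a x)) := by
    intro x
    have := congrFun (congrArg (fun T : H →L[ℂ] H => (T : H → H)) hab) x
    simpa using this
  have hs_sq' : ∀ x : H, s (s x) = a x := by
    intro x
    have := congrFun (congrArg (fun T : H →L[ℂ] H => (T : H → H)) hs_sq) x
    simpa using this
  have hscomm' : ∀ x : H, s (b (b x)) = b (b (s x)) := by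
    intro x
    have := congrFun (congrArg (fun T : H →L[ℂ] H => (T : H → H)) hscomm.eq) x
    simpa using this
  -- selfadjointness at the level of inner products
  have hsinner : ∀ x y : H, (inner ℂ (s x) y : ℂ) = inner ℂ x (s y) := fun x y => by
    simpa using (ContinuousLinearMap.isSelfAdjoint_iff_isSymmetric.mp hs_sa) x y
  have hbinner : ∀ x y : H, (inner ℂ (b x) y : ℂ) = inner ℂ x (b y) := fun x y => by
    simpa using (ContinuousLinearMap.isSelfAdjoint_iff_isSymmetric.mp hb) x y
  -- key: ⟪a (b x), b x⟫ = 0 for all x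
  have hkey : ∀ x : H, (inner ℂ (a (b x)) (b x) : ℂ) = 0 := by
    intro x
    have hI1 : (inner ℂ (a (b (b x))) x : ℂ) = -(inner ℂ (a (b x)) (b x)) := by
      rw [hab' (b x), inner_neg_left]
      congr 1
      rw [hbinner (a (b x)) x]
    have hI2 : (inner ℂ (a (b (b x))) x : ℂ) = inner ℂ (b (s x)) (b (s x)) := by
      rw [← hs_sq' (b (b x)), hscomm' x, hsinner (b (b (s x))) x]
      exact hbinner (b (s x)) (s x)
    have h1 : (0 : ℂ) ≤ inner ℂ (a (b x)) (b x) := hpos (b x)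
    have h2 : (0 : ℂ) ≤ -(inner ℂ (a (b x)) (b x) : ℂ) := by
      rw [← hI1, hI2, inner_self_eq_norm_sq_to_K]
      exact pow_nonneg (RCLike.ofReal_nonneg.mpr (norm_nonneg (b (s x)))) 2
    exact le_antisymm (neg_nonneg.mp h2) h1
  -- conclude `b x = 0` for every `x`
  ext x
  have hzero : (inner ℂ (s (b x)) (s (b x)) : ℂ) = 0 := by
    rw [← hsinner (s (b x)) (b x), hs_sq' (b x)]
    exact hkey x
  have hsbx : s (b x) = 0 := inner_self_eq_zero.mp hzero
  have habx : a (b x) = 0 := by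
    rw [← hs_sq' (b x), hsbx, map_zero]
  have : b x = 0 := hinj (by rw [habx, map_zero])
  simpa using this
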